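/- (Nonnegative linear combinations are univariate generalized Pareto.) Let Z = (Z_1,…,Z_D) be a standard MGP random vector, Z_j = E + S_j. Let σ ∈ (0,∞)^D, let ξ ∈ ℝ be a common shape parameter, and define Y_j = σ_j(exp(ξ Z_j) − 1)/ξ (interpreted as σ_j Z_j when ξ = 0). Let a ∈ [0,∞)^D with a ≠ 0 and set c = a_1 σ_1 + ⋯ + a_D σ_D > 0. Then P(a_1 Y_1 + ⋯ + a_D Y_D > 0) > 0, and for every x ≥ 0 with 1 + ξ x/c > 0: P( a_1 Y_1 + ⋯ + a_D Y_D > x | a_1 Y_1 + ⋯ + a_D Y_D > 0 ) = (1 + ξ x/c)^{−1/ξ} (interpreted as exp(−x/c) when ξ = 0). That is, conditionally on being positive, the linear combination is generalized Pareto with scale c = a·σ and shape ξ, independently of the dependence structure S. -/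

import Mathlib

open MeasureTheory ProbabilityTheory

/-- The marginal transformation `z ↦ σ (exp (ξ z) − 1)/ξ`, interpreted as `σ z` when
`ξ = 0`. -/
noncomputable def gpScale (σ ξ z : ℝ) : ℝ :=
  if ξ = 0 then σ * z else σ * (Real.exp (ξ * z) - 1) / ξ

/-- Key measure-theoretic lemma: if `E` is unit exponential, independent of `S`, and
`T, T0` are measurable thresholds, nonnegative on a set `G` carrying the law of `S`,
with `exp (-T s) = exp (-T0 s) * r` on `G`, then
`ℙ (T (S ·) < E ·) = ofReal r * ℙ (T0 (S ·) < E ·)` and the latter is positive. -/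
lemma mgp_master {Ω : Type*} [MeasureSpace Ω] [IsProbabilityMeasure (ℙ : Measure Ω)]
    {α : Type*} [MeasurableSpace α]
    (E : Ω → ℝ) (S : Ω → α) (hE : Measurable E) (hS : Measurable S)
    (hEexp : ∀ t : ℝ, 0 ≤ t → ℙ {ω | t < E ω} = ENNReal.ofReal (Real.exp (-t)))
    (hindep : IndepFun E S ℙ)
    (G : Set α) (hG : MeasurableSet G) (hSG : ∀ᵐ ω ∂ℙ, S ω ∈ G)
    (T T0 : α → ℝ) (hT : Measurable T) (hT0 : Measurable T0)
    (hTnn : ∀ s ∈ G, 0 ≤ T s) (hT0nn : ∀ s ∈ G, 0 ≤ T0 s)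
    (r : ℝ) (hr : 0 ≤ r)
    (hfac : ∀ s ∈ G, Real.exp (-T s) = Real.exp (-T0 s) * r) :
    ℙ {ω | T (S ω) < E ω} = ENNReal.ofReal r * ℙ {ω | T0 (S ω) < E ω}
      ∧ 0 < ℙ {ω | T0 (S ω) < E ω} := by
  haveI : IsProbabilityMeasure (Measure.map S ℙ) := Measure.isProbabilityMeasure_map hS.aemeasurable
  haveI : IsProbabilityMeasure (Measure.map E ℙ) := Measure.isProbabilityMeasure_map hE.aemeasurable
  have hmap : Measure.map (fun ω => (S ω, E ω)) ℙ
      = (Measure.map S ℙ).prod (Measure.map E ℙ) :=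
    (indepFun_iff_map_prod_eq_prod_map_map hS.aemeasurable hE.aemeasurable).mp hindep.symm
  have hGae : ∀ᵐ s ∂Measure.map S ℙ, s ∈ G := (ae_map_iff hS.aemeasurable hG).mpr hSG
  have key : ∀ (T' : α → ℝ), Measurable T' → (∀ s ∈ G, 0 ≤ T' s) →
      ℙ {ω | T' (S ω) < E ω}
        = ∫⁻ s, ENNReal.ofReal (Real.exp (-T' s)) ∂(Measure.map S ℙ) := by
    intro T' hT' hT'nn
    have hA : MeasurableSet {p : α × ℝ | T' p.1 < p.2} :=
      measurableSet_lt (hT'.comp measurable_fst) measurable_snd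
    have h1 : ℙ {ω | T' (S ω) < E ω}
        = (Measure.map (fun ω => (S ω, E ω)) ℙ) {p : α × ℝ | T' p.1 < p.2} := by
      rw [Measure.map_apply (hS.prodMk hE) hA]; rfl
    rw [h1, hmap, Measure.prod_apply hA]
    refine lintegral_congr_ae ?_
    filter_upwards [hGae] with s hs
    have h2 : Prod.mk s ⁻¹' {p : α × ℝ | T' p.1 < p.2} = Set.Ioi (T' s) := rfl
    rw [h2, Measure.map_apply hE measurableSet_Ioi]
    have h3 : E ⁻¹' Set.Ioi (T' s) = {ω | T' s < E ω} := rfl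
    rw [h3, hEexp _ (hT'nn s hs)]
  have meas0 : Measurable fun s => ENNReal.ofReal (Real.exp (-T0 s)) :=
    ENNReal.measurable_ofReal.comp (Real.measurable_exp.comp hT0.neg)
  have e0 := key T0 hT0 hT0nn
  have ex := key T hT hTnn
  constructor
  · rw [ex, e0]
    have hcongr : ∀ᵐ s ∂Measure.map S ℙ,
        ENNReal.ofReal (Real.exp (-T s))
          = ENNReal.ofReal r * ENNReal.ofReal (Real.exp (-T0 s)) := by
      filter_upwards [hGae] with s hs
      rw [hfac s hs, ENNReal.ofReal_mul (Real.exp_nonneg _), mul_comm]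
    rw [lintegral_congr_ae hcongr, lintegral_const_mul _ meas0]
  · rw [e0, lintegral_pos_iff_support meas0]
    have hsupp : Function.support (fun s => ENNReal.ofReal (Real.exp (-T0 s)))
        = Set.univ := by
      ext s
      simp [Function.mem_support, ENNReal.ofReal_eq_zero, not_le, Real.exp_pos]
    rw [hsupp]
    simp

theorem stmt_8
    {Ω : Type*} [MeasureSpace Ω] [IsProbabilityMeasure (ℙ : Measure Ω)]
    {D : ℕ} (hD : 0 < D)
    (E : Ω → ℝ) (S : Ω → Fin D → ℝ)
    (hEmeas : Measurable E) (hSmeas : Measurable S)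
    (hEexp : ∀ t : ℝ, 0 ≤ t → ℙ {ω | t < E ω} = ENNReal.ofReal (Real.exp (-t)))
    (hindep : IndepFun E S ℙ)
    (hSle : ∀ j, ∀ᵐ ω ∂ℙ, S ω j ≤ 0)
    (hSmax : ∀ᵐ ω ∂ℙ, (⨆ j, S ω j) = 0)
    (σ : Fin D → ℝ) (hσ : ∀ j, 0 < σ j) (ξ : ℝ)
    (Y : Ω → Fin D → ℝ) (hY : ∀ ω j, Y ω j = gpScale (σ j) ξ (E ω + S ω j))
    (a : Fin D → ℝ) (ha : ∀ j, 0 ≤ a j) (ha0 : a ≠ 0)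
    (c : ℝ) (hc : c = ∑ j, a j * σ j)
    (W : Ω → ℝ) (hW : ∀ ω, W ω = ∑ j, a j * Y ω j) :
    0 < c
    ∧ 0 < ℙ {ω | 0 < W ω}
    ∧ (∀ x : ℝ, 0 ≤ x → 0 < 1 + ξ * x / c →
        ℙ[{ω | x < W ω} | {ω | 0 < W ω}]
          = ENNReal.ofReal
              (if ξ = 0 then Real.exp (-x / c) else (1 + ξ * x / c) ^ (-1 / ξ))) := by
  classical
  -- positivity of c
  obtain ⟨j0, hj0⟩ : ∃ j, a j ≠ 0 := by
    by_contra h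
    push_neg at h
    exact ha0 (funext h)
  have hc0 : 0 < c := by
    rw [hc]
    exact Finset.sum_pos' (fun i _ => mul_nonneg (ha i) (hσ i).le)
      ⟨j0, Finset.mem_univ _, mul_pos ((ha j0).lt_of_ne (Ne.symm hj0)) (hσ j0)⟩
  have hcne : c ≠ 0 := hc0.ne'
  -- the key auxiliary functions
  set K : (Fin D → ℝ) → ℝ := fun s => ∑ j, a j * σ j * Real.exp (ξ * s j) with hKdef
  have hKpos : ∀ s, 0 < K s := by
    intro s
    exact Finset.sum_pos' (fun i _ => mul_nonneg (mul_nonneg (ha i) (hσ i).le) (Real.exp_nonneg _))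
      ⟨j0, Finset.mem_univ _,
        mul_pos (mul_pos ((ha j0).lt_of_ne (Ne.symm hj0)) (hσ j0)) (Real.exp_pos _)⟩
  set L : (Fin D → ℝ) → ℝ := fun s => ∑ j, a j * σ j * s j with hLdef
  set T : ℝ → (Fin D → ℝ) → ℝ := fun x s =>
    if ξ = 0 then (x - L s) / c else Real.log ((c + ξ * x) / K s) / ξ with hTdef
  set r : ℝ → ℝ := fun x =>
    if ξ = 0 then Real.exp (-x / c) else (1 + ξ * x / c) ^ (-1 / ξ) with hrdef
  set G : Set (Fin D → ℝ) := {s | ∀ j, s j ≤ 0} with hGdef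
  have hG : MeasurableSet G := by
    have : G = ⋂ j, {s : Fin D → ℝ | s j ≤ 0} := by
      ext s; simp [hGdef]
    rw [this]
    exact MeasurableSet.iInter fun j => measurableSet_le (measurable_pi_apply j) measurable_const
  have hSG : ∀ᵐ ω ∂ℙ, S ω ∈ G := ae_all_iff.mpr hSle
  have hcx : ∀ x : ℝ, 0 < 1 + ξ * x / c → 0 < c + ξ * x := by
    intro x h1
    have h2 : c + ξ * x = c * (1 + ξ * x / c) := by field_simp
    rw [h2]; exact mul_pos hc0 h1
  -- measurability of T x
  have hTmeas : ∀ x, Measurable (T x) := by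
    intro x
    by_cases hξ : ξ = 0
    · simp only [hTdef, if_pos hξ]
      exact (measurable_const.sub
        (Finset.measurable_sum _ fun j _ =>
          (measurable_pi_apply j).const_mul _)).div_const c
    · simp only [hTdef, if_neg hξ]
      have hK : Measurable K :=
        Finset.measurable_sum _ fun j _ =>
          ((by fun_prop : Measurable fun s : Fin D → ℝ => ξ * s j).exp.const_mul _)
      exact ((Real.measurable_log.comp (measurable_const.div hK)).div_const ξ)
  -- W in closed form
  have hWform : ∀ ω, W ω = (if ξ = 0 then c * E ω + L (S ω)
      else (Real.exp (ξ * E ω) * K (S ω) - c) / ξ) := by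
    intro ω
    by_cases hξ : ξ = 0
    · rw [if_pos hξ, hW, hc]
      simp only [hY, gpScale, if_pos hξ, hLdef]
      rw [Finset.sum_mul, ← Finset.sum_add_distrib]
      exact Finset.sum_congr rfl fun j _ => by ring
    · rw [if_neg hξ, hW, hc, hKdef]
      simp only [hY, gpScale, if_neg hξ]
      rw [Finset.mul_sum, ← Finset.sum_sub_distrib, Finset.sum_div]
      refine Finset.sum_congr rfl fun j _ => ?_
      rw [mul_add ξ, Real.exp_add]
      ring
  -- the key inversion
  have hiff : ∀ x : ℝ, 0 < 1 + ξ * x / c → ∀ ω, (x < W ω ↔ T x (S ω) < E ω) := by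
    intro x h1 ω
    have hcξx := hcx x h1
    by_cases hξ : ξ = 0
    · rw [hWform ω, if_pos hξ]
      simp only [hTdef, if_pos hξ]
      rw [div_lt_iff₀ hc0]
      constructor <;> intro h <;> nlinarith
    · rw [hWform ω, if_neg hξ]
      simp only [hTdef, if_neg hξ]
      set u := Real.exp (ξ * E ω) with hu
      have hK := hKpos (S ω)
      have ht : 0 < (c + ξ * x) / K (S ω) := div_pos hcξx hK
      rcases lt_or_gt_of_ne hξ with hξneg | hξpos
      · rw [lt_div_iff_of_neg hξneg, div_lt_iff_of_neg hξneg,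
          Real.lt_log_iff_exp_lt ht, mul_comm (E ω) ξ, ← hu, lt_div_iff₀ hK]
        constructor <;> intro h <;> linarith
      · rw [lt_div_iff₀ hξpos, div_lt_iff₀ hξpos,
          Real.log_lt_iff_lt_exp ht, mul_comm (E ω) ξ, ← hu, div_lt_iff₀ hK]
        constructor <;> intro h <;> linarith
  -- nonnegativity of the threshold on G
  have hTnn : ∀ x : ℝ, 0 ≤ x → 0 < 1 + ξ * x / c → ∀ s ∈ G, 0 ≤ T x s := by
    intro x hx h1 s hs
    have hcξx := hcx x h1
    by_cases hξ : ξ = 0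
    · simp only [hTdef, if_pos hξ]
      have hL : L s ≤ 0 := by
        refine Finset.sum_nonpos fun j _ => ?_
        exact mul_nonpos_of_nonneg_of_nonpos (mul_nonneg (ha j) (hσ j).le) (hs j)
      exact div_nonneg (by linarith) hc0.le
    · simp only [hTdef, if_neg hξ]
      have hK := hKpos s
      rcases lt_or_gt_of_ne hξ with hξneg | hξpos
      · -- ξ < 0 : K s ≥ c ≥ c + ξx, log ≤ 0
        have hKc : c ≤ K s := by
          rw [hc, hKdef]
          refine Finset.sum_le_sum fun j _ => ?_
          have : (1 : ℝ) ≤ Real.exp (ξ * s j) := by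
            rw [Real.one_le_exp_iff]
            nlinarith [hξneg.le, hs j]
          nlinarith [mul_nonneg (ha j) (hσ j).le]
        have hle1 : (c + ξ * x) / K s ≤ 1 := by
          rw [div_le_one hK]
          nlinarith
        have hlog : Real.log ((c + ξ * x) / K s) ≤ 0 :=
          Real.log_nonpos (div_nonneg hcξx.le hK.le) hle1
        rw [div_nonneg_iff]
        right
        exact ⟨hlog, hξneg.le⟩
      · -- ξ > 0 : K s ≤ c ≤ c + ξx, log ≥ 0
        have hKc : K s ≤ c := by
          rw [hc, hKdef]
          refine Finset.sum_le_sum fun j _ => ?_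
          have : Real.exp (ξ * s j) ≤ 1 := by
            rw [Real.exp_le_one_iff]
            exact mul_nonpos_of_nonneg_of_nonpos hξpos.le (hs j)
          nlinarith [mul_nonneg (ha j) (hσ j).le]
        have h1le : (1 : ℝ) ≤ (c + ξ * x) / K s := by
          rw [le_div_iff₀ hK]
          nlinarith
        exact div_nonneg (Real.log_nonneg h1le) hξpos.le
  -- factorization
  have hrnn : ∀ x : ℝ, 0 < 1 + ξ * x / c → 0 ≤ r x := by
    intro x h1
    by_cases hξ : ξ = 0
    · simp only [hrdef, if_pos hξ]; exact (Real.exp_pos _).le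
    · simp only [hrdef, if_neg hξ]; exact Real.rpow_nonneg h1.le _
  have hfac : ∀ x : ℝ, 0 ≤ x → 0 < 1 + ξ * x / c → ∀ s ∈ G,
      Real.exp (-T x s) = Real.exp (-T 0 s) * r x := by
    intro x hx h1 s _
    have hcξx := hcx x h1
    by_cases hξ : ξ = 0
    · simp only [hTdef, hrdef, if_pos hξ]
      rw [← Real.exp_add]
      congr 1
      field_simp
      ring
    · simp only [hTdef, hrdef, if_neg hξ]
      have hK := hKpos s
      have hdiff : Real.log ((c + ξ * x) / K s) / ξ
          = Real.log ((c + ξ * 0) / K s) / ξ + Real.log (1 + ξ * x / c) / ξ := by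
        rw [Real.log_div hcξx.ne' hK.ne', Real.log_div (by rw [mul_zero, add_zero]; exact hcne) hK.ne']
        rw [← add_div]
        congr 1
        have h2 : 1 + ξ * x / c = (c + ξ * x) / c := by field_simp
        rw [h2, Real.log_div hcξx.ne' hcne]
        ring
      rw [hdiff, neg_add, Real.exp_add]
      congr 1
      rw [Real.rpow_def_of_pos h1]
      congr 1
      ring
  -- apply the master lemma
  have hset : ∀ x : ℝ, 0 < 1 + ξ * x / c →
      {ω | x < W ω} = {ω | T x (S ω) < E ω} := by
    intro x h1
    ext ω
    exact hiff x h1 ω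
  have h10 : (0 : ℝ) < 1 + ξ * 0 / c := by norm_num
  have hset0 := hset 0 h10
  have hT0nn := hTnn 0 le_rfl h10
  refine ⟨hc0, ?_, ?_⟩
  · rw [hset0]
    exact (mgp_master E S hEmeas hSmeas hEexp hindep G hG hSG (T 0) (T 0)
      (hTmeas 0) (hTmeas 0) hT0nn hT0nn 1 zero_le_one
      (fun s _ => by rw [mul_one])).2
  · intro x hx h1
    obtain ⟨hkey, hpos⟩ := mgp_master E S hEmeas hSmeas hEexp hindep G hG hSG
      (T x) (T 0) (hTmeas x) (hTmeas 0) (hTnn x hx h1) hT0nn (r x) (hrnn x h1)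
      (hfac x hx h1)
    have hB : MeasurableSet {ω | 0 < W ω} := by
      rw [hset0]
      exact measurableSet_lt ((hTmeas 0).comp hSmeas) hEmeas
    have hsub : {ω | x < W ω} ⊆ {ω | 0 < W ω} := fun ω h => hx.trans_lt h
    rw [cond_apply hB, Set.inter_eq_right.mpr hsub]
    have hA : ℙ {ω | x < W ω} = ENNReal.ofReal (r x) * ℙ {ω | 0 < W ω} := by
      rw [hset x h1, hset0]
      exact hkey
    rw [← hset0] at hpos
    rw [hA, mul_comm (ENNReal.ofReal (r x)) (ℙ {ω | 0 < W ω}), ← mul_assoc,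
      ENNReal.inv_mul_cancel hpos.ne' (measure_ne_top ℙ _), one_mul]
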